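/- (Adversarial loss sequence forcing large loss.) Let T ∈ ℕ and M > 0 with 4·M a positive integer and T ≥ 4·M. Let z be a deterministic strategy for the two-action online problem: for each t ∈ {1, …, T}, the prediction z_t ∈ [0, 1] is a function of the previously revealed losses l₁, …, l_{t−1} ∈ [0,1]². Suppose that for every loss sequence l₁, …, l_T ∈ [0,1]², Σ_{t=1}^T ((1 − z_t)·l_t(0) + z_t·l_t(1)) ≤ min_{i∈{0,1}} Σ_{t=1}^T l_t(i) + M. Then there exists a loss sequence with every l_t ∈ {(0,1), (1,0), (1/2,1/2)} for which Σ_{t=1}^T ((1 − z_t)·l_t(0) + z_t·l_t(1)) ≥ T/2 + M·2^{−4M}. -/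

import Mathlib

open Finset

noncomputable section Aux18

/-- adversarial loss sequence determined by a leaf `σ` of the depth-`m` tree -/
def advL (m : ℕ) (σ : Fin m → Bool) (t : ℕ) : ℝ × ℝ :=
  if h : 1 ≤ t ∧ t ≤ m then
    (if σ ⟨t - 1, by omega⟩ then ((0:ℝ), (1:ℝ)) else (1, 0))
  else (1/2, 1/2)

def stepL (S : ℕ → (ℕ → ℝ × ℝ) → ℝ) (l : ℕ → ℝ × ℝ) (t : ℕ) : ℝ :=
  (1 - S t l) * (l t).1 + S t l * (l t).2

def fL (S : ℕ → (ℕ → ℝ × ℝ) → ℝ) (m : ℕ) (σ : Fin m → Bool) : ℝ :=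
  ∑ t ∈ Icc 1 m, stepL S (advL m σ) t

lemma advL_mem (m : ℕ) (σ : Fin m → Bool) (t : ℕ) :
    advL m σ t ∈ ({((0:ℝ), (1:ℝ)), (1, 0), (1/2, 1/2)} : Set (ℝ × ℝ)) := by
  unfold advL
  split_ifs <;> simp_all

lemma advL_of_gt (m : ℕ) (σ : Fin m → Bool) (t : ℕ) (ht : m < t) :
    advL m σ t = (1/2, 1/2) := by
  unfold advL
  rw [dif_neg (by omega)]

lemma SadvL_eq (S : ℕ → (ℕ → ℝ × ℝ) → ℝ)
    (hdep : ∀ t : ℕ, ∀ l l' : ℕ → ℝ × ℝ,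
      (∀ s, 1 ≤ s → s < t → l s = l' s) → S t l = S t l')
    (m t : ℕ) (σ σ' : Fin m → Bool)
    (hagree : ∀ j : Fin m, (j : ℕ) + 1 < t → σ j = σ' j) :
    S t (advL m σ) = S t (advL m σ') := by
  apply hdep
  intro s h1 h2
  by_cases h : 1 ≤ s ∧ s ≤ m
  · have key : σ ⟨s - 1, by omega⟩ = σ' ⟨s - 1, by omega⟩ :=
      hagree ⟨s - 1, by omega⟩ (show s - 1 + 1 < t by omega)
    unfold advL
    rw [dif_pos h, dif_pos h, key]
  · unfold advL
    rw [dif_neg h, dif_neg h]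

lemma pair_sum (S : ℕ → (ℕ → ℝ × ℝ) → ℝ)
    (hdep : ∀ t : ℕ, ∀ l l' : ℕ → ℝ × ℝ,
      (∀ s, 1 ≤ s → s < t → l s = l' s) → S t l = S t l')
    (m t : ℕ) (ht1 : 1 ≤ t) (ht2 : t ≤ m) :
    ∑ σ : Fin m → Bool, stepL S (advL m σ) t = 2 ^ m / 2 := by
  set j : Fin m := ⟨t - 1, by omega⟩ with hj
  set ι : (Fin m → Bool) → (Fin m → Bool) := fun σ => Function.update σ j (!σ j) with hι
  have hinv : Function.Involutive ι := by
    intro σ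
    funext k
    by_cases hk : k = j
    · subst hk; simp [hι]
    · simp [hι, Function.update_of_ne hk]
  have hpair : ∀ σ : Fin m → Bool,
      stepL S (advL m σ) t + stepL S (advL m (ι σ)) t = 1 := by
    intro σ
    have hz : S t (advL m (ι σ)) = S t (advL m σ) := by
      apply SadvL_eq S hdep
      intro k hk
      have hkj : k ≠ j := by
        intro hkj
        rw [hkj] at hk
        simp only [hj] at hk
        omega
      simp [hι, Function.update_of_ne hkj]
    have hL : advL m σ t = if σ j then ((0:ℝ), (1:ℝ)) else (1, 0) := by
      unfold advL; rw [dif_pos ⟨ht1, ht2⟩]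
    have hL' : advL m (ι σ) t = if (!σ j) then ((0:ℝ), (1:ℝ)) else (1, 0) := by
      unfold advL; rw [dif_pos ⟨ht1, ht2⟩]
      congr 1
      simp [hι, hj]
    cases hσ : σ j <;>
      simp [stepL, hL, hL', hσ, hz] <;> ring
  have hcomp : ∑ σ : Fin m → Bool, stepL S (advL m (ι σ)) t
      = ∑ σ : Fin m → Bool, stepL S (advL m σ) t :=
    Equiv.sum_comp (Function.Involutive.toPerm ι hinv)
      (fun σ => stepL S (advL m σ) t)
  have h2 : (∑ σ : Fin m → Bool, stepL S (advL m σ) t)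
      + (∑ σ : Fin m → Bool, stepL S (advL m σ) t) = 2 ^ m := by
    nth_rewrite 2 [← hcomp]
    rw [← Finset.sum_add_distrib]
    simp only [hpair]
    simp [Finset.card_univ]
  linarith

end Aux18

theorem stmt_18 (T : ℕ) (M : ℝ) (hM : 0 < M)
    (hMint : ∃ m : ℕ, 0 < m ∧ (m : ℝ) = 4 * M)
    (hTM : 4 * M ≤ (T : ℝ))
    (S : ℕ → (ℕ → ℝ × ℝ) → ℝ)
    (hdep : ∀ t : ℕ, ∀ l l' : ℕ → ℝ × ℝ,
      (∀ s, 1 ≤ s → s < t → l s = l' s) → S t l = S t l')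
    (hrange : ∀ t l, S t l ∈ Set.Icc (0:ℝ) 1)
    (hregret : ∀ l : ℕ → ℝ × ℝ,
      (∀ t, 1 ≤ t → t ≤ T →
        (l t).1 ∈ Set.Icc (0:ℝ) 1 ∧ (l t).2 ∈ Set.Icc (0:ℝ) 1) →
      (∑ t ∈ Finset.Icc 1 T, ((1 - S t l) * (l t).1 + S t l * (l t).2))
        ≤ min (∑ t ∈ Finset.Icc 1 T, (l t).1)
              (∑ t ∈ Finset.Icc 1 T, (l t).2) + M) :
    ∃ l : ℕ → ℝ × ℝ,
      (∀ t, 1 ≤ t → t ≤ T →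
        l t ∈ ({((0:ℝ), (1:ℝ)), (1, 0), (1/2, 1/2)} : Set (ℝ × ℝ))) ∧
      (∑ t ∈ Finset.Icc 1 T, ((1 - S t l) * (l t).1 + S t l * (l t).2))
        ≥ (T : ℝ) / 2 + M * (2 : ℝ) ^ (-(4 * M)) := by
  obtain ⟨m, hm0, hmM⟩ := hMint
  have hmT : m ≤ T := by
    have : (m : ℝ) ≤ (T : ℝ) := by rw [hmM]; exact hTM
    exact_mod_cast this
  -- split sum over Icc 1 T into Icc 1 m and Ioc m T
  have hsplit : ∀ g : ℕ → ℝ,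
      ∑ t ∈ Finset.Icc 1 T, g t = ∑ t ∈ Finset.Icc 1 m, g t + ∑ t ∈ Finset.Ioc m T, g t := by
    intro g
    rw [show Finset.Icc 1 T = Finset.Ioc 0 T from by rw [← Finset.Icc_add_one_left_eq_Ioc, zero_add],
        show Finset.Icc 1 m = Finset.Ioc 0 m from by rw [← Finset.Icc_add_one_left_eq_Ioc, zero_add]]
    exact (Finset.sum_Ioc_consecutive g (Nat.zero_le m) hmT).symm
  have hcastTm : ((T - m : ℕ) : ℝ) = (T : ℝ) - m := by
    push_cast [Nat.cast_sub hmT]; ring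
  -- total learner loss decomposition
  have htot : ∀ σ : Fin m → Bool,
      ∑ t ∈ Finset.Icc 1 T, stepL S (advL m σ) t = fL S m σ + ((T : ℝ) - m) / 2 := by
    intro σ
    rw [hsplit]
    unfold fL
    congr 1
    have hc : ∀ t ∈ Finset.Ioc m T, stepL S (advL m σ) t = 1/2 := by
      intro t ht
      unfold stepL
      rw [advL_of_gt m σ t (Finset.mem_Ioc.mp ht).1]
      ring
    rw [Finset.sum_congr rfl hc, Finset.sum_const, Nat.card_Ioc, nsmul_eq_mul, hcastTm]
    ring
  set σ₀ : Fin m → Bool := fun _ => true with hσ₀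
  -- f σ₀ ≤ M from regret bound
  have hfσ₀ : fL S m σ₀ ≤ M := by
    have hb : ∀ t, 1 ≤ t → t ≤ T →
        (advL m σ₀ t).1 ∈ Set.Icc (0:ℝ) 1 ∧ (advL m σ₀ t).2 ∈ Set.Icc (0:ℝ) 1 := by
      intro t _ _
      have := advL_mem m σ₀ t
      simp only [Set.mem_insert_iff, Set.mem_singleton_iff] at this
      rcases this with h | h | h <;> rw [h] <;> norm_num
    have hreg := hregret (advL m σ₀) hb
    have hc1 : ∑ t ∈ Finset.Icc 1 T, (advL m σ₀ t).1 = ((T : ℝ) - m) / 2 := by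
      rw [hsplit]
      have e1 : ∑ t ∈ Finset.Icc 1 m, (advL m σ₀ t).1 = 0 := by
        apply Finset.sum_eq_zero
        intro t ht
        obtain ⟨h1, h2⟩ := Finset.mem_Icc.mp ht
        unfold advL
        rw [dif_pos ⟨h1, h2⟩]
        simp [hσ₀]
      have e2 : ∑ t ∈ Finset.Ioc m T, (advL m σ₀ t).1 = ((T : ℝ) - m) / 2 := by
        have hc : ∀ t ∈ Finset.Ioc m T, (advL m σ₀ t).1 = 1/2 := by
          intro t ht
          rw [advL_of_gt m σ₀ t (Finset.mem_Ioc.mp ht).1]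
        rw [Finset.sum_congr rfl hc, Finset.sum_const, Nat.card_Ioc, nsmul_eq_mul, hcastTm]
        ring
      rw [e1, e2]; ring
    have hc2 : ∑ t ∈ Finset.Icc 1 T, (advL m σ₀ t).2 = m + ((T : ℝ) - m) / 2 := by
      rw [hsplit]
      have e1 : ∑ t ∈ Finset.Icc 1 m, (advL m σ₀ t).2 = m := by
        have hc : ∀ t ∈ Finset.Icc 1 m, (advL m σ₀ t).2 = 1 := by
          intro t ht
          obtain ⟨h1, h2⟩ := Finset.mem_Icc.mp ht
          unfold advL
          rw [dif_pos ⟨h1, h2⟩]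
          simp [hσ₀]
        rw [Finset.sum_congr rfl hc, Finset.sum_const, Nat.card_Icc, nsmul_eq_mul]
        simp
      have e2 : ∑ t ∈ Finset.Ioc m T, (advL m σ₀ t).2 = ((T : ℝ) - m) / 2 := by
        have hc : ∀ t ∈ Finset.Ioc m T, (advL m σ₀ t).2 = 1/2 := by
          intro t ht
          rw [advL_of_gt m σ₀ t (Finset.mem_Ioc.mp ht).1]
        rw [Finset.sum_congr rfl hc, Finset.sum_const, Nat.card_Ioc, nsmul_eq_mul, hcastTm]
        ring
      rw [e1, e2]
    rw [hc1, hc2] at hreg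
    have hmin : min (((T : ℝ) - m) / 2) ((m : ℝ) + ((T : ℝ) - m) / 2) = ((T : ℝ) - m) / 2 := by
      apply min_eq_left
      have : (0:ℝ) ≤ m := Nat.cast_nonneg m
      linarith
    rw [hmin] at hreg
    have := htot σ₀
    unfold stepL at this
    linarith [hreg, this]
  -- averaging
  have havg : ∑ σ : Fin m → Bool, fL S m σ = m * ((2:ℝ) ^ m / 2) := by
    unfold fL
    rw [Finset.sum_comm]
    rw [Finset.sum_congr rfl (fun t ht => pair_sum S hdep m t
      (Finset.mem_Icc.mp ht).1 (Finset.mem_Icc.mp ht).2)]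
    rw [Finset.sum_const, Nat.card_Icc, nsmul_eq_mul]
    simp
  have hpow : (0:ℝ) < 2 ^ m := by positivity
  -- existence of a good leaf
  have hex : ∃ σ : Fin m → Bool, (m : ℝ) / 2 + M / 2 ^ m ≤ fL S m σ := by
    by_contra hcon
    push_neg at hcon
    have hsum_le : ∑ σ : Fin m → Bool, fL S m σ
        ≤ M + ((2:ℝ) ^ m - 1) * ((m : ℝ) / 2 + M / 2 ^ m) := by
      rw [← Finset.sum_erase_add _ _ (Finset.mem_univ σ₀)]
      have h1 : ∑ σ ∈ Finset.univ.erase σ₀, fL S m σ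
          ≤ ((2:ℝ) ^ m - 1) * ((m : ℝ) / 2 + M / 2 ^ m) := by
        have hcard : ((Finset.univ.erase σ₀).card : ℝ) = (2:ℝ) ^ m - 1 := by
          rw [Finset.card_erase_of_mem (Finset.mem_univ σ₀), Finset.card_univ]
          have : Fintype.card (Fin m → Bool) = 2 ^ m := by simp
          rw [this]
          have h2m : 1 ≤ 2 ^ m := Nat.one_le_two_pow
          push_cast [Nat.cast_sub h2m]
          ring
        calc ∑ σ ∈ Finset.univ.erase σ₀, fL S m σ
            ≤ ∑ σ ∈ Finset.univ.erase σ₀, ((m : ℝ) / 2 + M / 2 ^ m) :=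
              Finset.sum_le_sum (fun σ _ => le_of_lt (hcon σ))
          _ = ((2:ℝ) ^ m - 1) * ((m : ℝ) / 2 + M / 2 ^ m) := by
              rw [Finset.sum_const, nsmul_eq_mul, hcard]
      linarith
    rw [havg] at hsum_le
    rw [hmM] at hsum_le
    have hPA : (2:ℝ) ^ m * (M / 2 ^ m) = M := by field_simp
    have hApos : (0:ℝ) < M / 2 ^ m := by positivity
    nlinarith [hsum_le, hPA, hApos]
  obtain ⟨σgood, hσgood⟩ := hex
  refine ⟨advL m σgood, fun t _ _ => advL_mem m σgood t, ?_⟩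
  have hrpow : (2 : ℝ) ^ (-(4 * M)) = ((2:ℝ) ^ m)⁻¹ := by
    rw [← hmM, Real.rpow_neg (by norm_num), Real.rpow_natCast]
  have hrpow2 : M * (2 : ℝ) ^ (-(4 * M)) = M / 2 ^ m := by
    rw [hrpow]; ring
  have hdecomp := htot σgood
  unfold stepL at hdecomp
  rw [hdecomp, hrpow2]
  nlinarith [hσgood, hmM]
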